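/- arXiv:math/0507602 — 2 statements merged into one kernel-verified Lean document; each statement's English description precedes it below -/
import Mathlib

section
/- (Skein relation, case k = r.) Let i_1, …, i_r ∈ {1, …, n} be pairwise distinct indices with r ≥ 1, and let u, v, w ∈ F be group elements. Then δ_{i_1}…δ_{i_r}(v · u⁻¹ x_{i_r} u · w)(1) − δ_{i_1}…δ_{i_r}(v w)(1) = δ_{i_1}…δ_{i_{r-1}}(v u⁻¹)(1), where an empty composite of Fox derivatives applied to a group element and evaluated at 1 is understood to be 1. (Topologically: μ_{i_1…i_r}(L, l₊) − μ_{i_1…i_r}(L, l₋) = μ_{i_1…i_{r-1}}(L − L_{i_r}, l_∞).) -/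
open MonoidAlgebra

/-- `FG n` is the free group on `n` generators `x_1, …, x_n`. -/
abbrev FG (n : ℕ) : Type := FreeGroup (Fin n)

/-- `GR n` is the integral group ring `ℤF` of the free group on `n` generators. -/
abbrev GR (n : ℕ) : Type := MonoidAlgebra ℤ (FG n)

/-- Iterated application of Fox derivatives along a list of indices:
`foxIter δ [i₁, …, iᵣ] x = δ i₁ (δ i₂ (⋯ (δ iᵣ x)))`; the empty list gives `x` itself. -/
noncomputable def foxIter {n : ℕ} (δ : Fin n → (GR n →ₗ[ℤ] GR n)) : List (Fin n) → GR n → GR n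
  | [], x => x
  | i :: l, x => δ i (foxIter δ l x)

lemma foxIter_append {n : ℕ} (δ : Fin n → (GR n →ₗ[ℤ] GR n)) (s t : List (Fin n)) (x : GR n) :
    foxIter δ (s ++ t) x = foxIter δ s (foxIter δ t x) := by
  induction s with
  | nil => rfl
  | cons j s ih => simp [foxIter, ih]

lemma foxIter_add {n : ℕ} (δ : Fin n → (GR n →ₗ[ℤ] GR n)) (s : List (Fin n)) (x y : GR n) :
    foxIter δ s (x + y) = foxIter δ s x + foxIter δ s y := by
  induction s with
  | nil => rfl
  | cons j s ih => simp [foxIter, ih]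

lemma foxIter_sub {n : ℕ} (δ : Fin n → (GR n →ₗ[ℤ] GR n)) (s : List (Fin n)) (x y : GR n) :
    foxIter δ s (x - y) = foxIter δ s x - foxIter δ s y := by
  induction s with
  | nil => rfl
  | cons j s ih => simp [foxIter, ih]

/-- Twisted derivation property for a general second argument. -/
lemma foxDerivMul {n : ℕ} (δ : Fin n → (GR n →ₗ[ℤ] GR n))
    (hδ₃ : ∀ (i : Fin n) (u v : FG n),
      δ i (of ℤ (FG n) (u * v)) =
        δ i (of ℤ (FG n) u) + of ℤ (FG n) u * δ i (of ℤ (FG n) v))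
    (ε : GR n →+* ℤ)
    (hε : ∀ g : FG n, ε (of ℤ (FG n) g) = 1)
    (j : Fin n) (g : FG n) (z : GR n) :
    δ j (of ℤ (FG n) g * z) = ε z • δ j (of ℤ (FG n) g) + of ℤ (FG n) g * δ j z := by
  induction z using MonoidAlgebra.induction_on with
  | of k =>
    rw [← map_mul (of ℤ (FG n)), hδ₃ j g k, hε, one_smul]
  | add f f' hf hf' =>
    simp only [mul_add, map_add, hf, hf', add_smul]
    abel
  | smul r f hf =>
    have hez : ε (r • f) = r • ε f := map_zsmul ε r f
    rw [mul_smul_comm, map_smul, hf, smul_add, smul_smul, hez, smul_eq_mul]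
    rw [(δ j).map_smul r f, mul_smul_comm]

/-- Key vanishing lemma. -/
lemma keyL {n : ℕ} (δ : Fin n → (GR n →ₗ[ℤ] GR n))
    (hδ₂ : ∀ i j : Fin n, j ≠ i → δ i (of ℤ (FG n) (FreeGroup.of j)) = 0)
    (hδ₃ : ∀ (i : Fin n) (u v : FG n),
      δ i (of ℤ (FG n) (u * v)) =
        δ i (of ℤ (FG n) u) + of ℤ (FG n) u * δ i (of ℤ (FG n) v))
    (ε : GR n →+* ℤ)
    (hε : ∀ g : FG n, ε (of ℤ (FG n) g) = 1)
    (i : Fin n) (p : FG n) :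
    ∀ (s : List (Fin n)), i ∉ s → ∀ z : GR n,
      ε (foxIter δ s
        ((of ℤ (FG n) (p * FreeGroup.of i) - of ℤ (FG n) p) * z)) = 0 := by
  intro s
  induction s using List.reverseRecOn with
  | nil =>
    intro _ z
    simp only [foxIter]
    simp only [sub_mul, map_sub, map_mul, hε]
    ring
  | append_singleton s j ih =>
    intro hs z
    have hi' : i ∉ s := fun h => hs (List.mem_append_left _ h)
    have hij : i ≠ j := by
      intro h
      exact hs (List.mem_append_right _ (by simp [h]))
    rw [foxIter_append]
    have hstep : foxIter δ [j]
        ((of ℤ (FG n) (p * FreeGroup.of i) - of ℤ (FG n) p) * z)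
        = (of ℤ (FG n) (p * FreeGroup.of i) - of ℤ (FG n) p) * δ j z := by
      show δ j ((of ℤ (FG n) (p * FreeGroup.of i) - of ℤ (FG n) p) * z) = _
      rw [sub_mul, map_sub, foxDerivMul δ hδ₃ ε hε, foxDerivMul δ hδ₃ ε hε]
      have h0 : δ j (of ℤ (FG n) (p * FreeGroup.of i)) = δ j (of ℤ (FG n) p) := by
        rw [hδ₃ j p (FreeGroup.of i), hδ₂ j i hij, mul_zero, add_zero]
      rw [h0, sub_mul]
      abel
    rw [hstep]
    exact ih hi' (δ j z)

/-- An auxiliary noncommutative ring identity. -/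
lemma ring_id {R : Type*} [Ring R] (A B C X du dw dv : R) (hBC : B * C = 1) :
    (dv + A * (-(B * du) + B * (1 + X * (du + C * dw)))) - (dv + A * dw)
      = A * B + (A * B * X - A * B) * (du + C * dw) := by
  have h : A * dw = A * B * (C * dw) := by
    rw [mul_assoc A B (C * dw), ← mul_assoc B C dw, hBC, one_mul]
  rw [h]
  noncomm_ring

/-- Skein relation, case `k = r`:
`δ_{i₁}…δ_{iᵣ}(v u⁻¹ x_{iᵣ} u w)(1) - δ_{i₁}…δ_{iᵣ}(vw)(1) = δ_{i₁}…δ_{iᵣ₋₁}(v u⁻¹)(1)`,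
i.e. `μ_{i₁…iᵣ}(L, l₊) - μ_{i₁…iᵣ}(L, l₋) = μ_{i₁…iᵣ₋₁}(L - L_{iᵣ}, l∞)`. -/
theorem milnor_skein_relation_last_index (n : ℕ)
    (δ : Fin n → (GR n →ₗ[ℤ] GR n))
    (hδ₁ : ∀ i : Fin n, δ i (of ℤ (FG n) (FreeGroup.of i)) = 1)
    (hδ₂ : ∀ i j : Fin n, j ≠ i → δ i (of ℤ (FG n) (FreeGroup.of j)) = 0)
    (hδ₃ : ∀ (i : Fin n) (u v : FG n),
      δ i (of ℤ (FG n) (u * v)) =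
        δ i (of ℤ (FG n) u) + of ℤ (FG n) u * δ i (of ℤ (FG n) v))
    (ε : GR n →+* ℤ)
    (hε : ∀ g : FG n, ε (of ℤ (FG n) g) = 1)
    (a : List (Fin n)) (i : Fin n) (hnd : (a ++ [i]).Nodup) (u v w : FG n) :
    ε (foxIter δ (a ++ [i])
        (of ℤ (FG n) (v * (u⁻¹ * FreeGroup.of i * u) * w))) -
      ε (foxIter δ (a ++ [i]) (of ℤ (FG n) (v * w))) =
        ε (foxIter δ a (of ℤ (FG n) (v * u⁻¹))) := by
  set O := of ℤ (FG n) with hO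
  set xi := FreeGroup.of i with hxi
  have hi : i ∉ a := by
    rw [List.nodup_append] at hnd
    intro h
    exact hnd.2.2 i h i (by simp) rfl
  -- δ i (O 1) = 0
  have h1 : δ i (O 1) = 0 := by
    have h := hδ₃ i 1 1
    rw [one_mul, map_one, one_mul] at h
    rw [map_one]
    exact (add_eq_left.mp h.symm)
  -- inverse rule
  have hinv : δ i (O u⁻¹) = -(O u⁻¹ * δ i (O u)) := by
    have h := hδ₃ i u⁻¹ u
    rw [inv_mul_cancel, h1] at h
    exact (neg_eq_of_add_eq_zero_left h.symm).symm
  have hw : v * (u⁻¹ * xi * u) * w = v * (u⁻¹ * (xi * (u * w))) := by group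
  have eX : δ i (O (v * (u⁻¹ * xi * u) * w)) =
      δ i (O v) + O v * (δ i (O u⁻¹) +
        O u⁻¹ * (1 + O xi * (δ i (O u) + O u * δ i (O w)))) := by
    rw [hw, hδ₃ i v, hδ₃ i u⁻¹, hδ₃ i xi, hδ₃ i u, hδ₁ i]
  have hBC : O u⁻¹ * O u = 1 := by
    rw [← map_mul, inv_mul_cancel, map_one]
  have hD : δ i (O (v * (u⁻¹ * xi * u) * w)) - δ i (O (v * w)) =
      O (v * u⁻¹) + (O (v * u⁻¹ * xi) - O (v * u⁻¹)) *
        (δ i (O u) + O u * δ i (O w)) := by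
    rw [eX, hδ₃ i v w, hinv, map_mul, map_mul, map_mul]
    exact ring_id (O v) (O u⁻¹) (O u) (O xi) (δ i (O u)) (δ i (O w)) (δ i (O v)) hBC
  rw [foxIter_append, foxIter_append]
  have hsingle : ∀ x : GR n, foxIter δ [i] x = δ i x := fun x => rfl
  rw [hsingle, hsingle, ← map_sub ε, ← foxIter_sub δ a, hD, foxIter_add, map_add,
    keyL δ hδ₂ hδ₃ ε hε i (v * u⁻¹) a hi, add_zero]
end

section
/- (Skein relation, case k = 1.) Let i_1, …, i_r ∈ {1, …, n} be pairwise distinct indices with r ≥ 1, and let u, v, w ∈ F be group elements. Then δ_{i_1}…δ_{i_r}(v · u⁻¹ x_{i_1} u · w)(1) − δ_{i_1}…δ_{i_r}(v w)(1) = δ_{i_2}…δ_{i_r}(u w)(1), where an empty composite of Fox derivatives applied to a group element and evaluated at 1 is understood to be 1. (Topologically: μ_{i_1…i_r}(L, l₊) − μ_{i_1…i_r}(L, l₋) = μ_{i_2…i_r}(L − L_{i_1}, l₀).) -/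
open MonoidAlgebra

section aux
variable {n : ℕ} (δ : Fin n → (GR n →ₗ[ℤ] GR n))

-- product rule
lemma prod_rule
    (hδ₃ : ∀ (i : Fin n) (u v : FG n),
      δ i (of ℤ (FG n) (u * v)) =
        δ i (of ℤ (FG n) u) + of ℤ (FG n) u * δ i (of ℤ (FG n) v))
    (ε : GR n →+* ℤ) (hε : ∀ g : FG n, ε (of ℤ (FG n) g) = 1)
    (j : Fin n) (α β : GR n) :
    δ j (α * β) = ε β • δ j α + α * δ j β := by
  induction β using MonoidAlgebra.induction_linear with
  | zero => simp
  | add f g hf hg =>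
      rw [mul_add, map_add, map_add, hf, hg, map_add, mul_add]
      rw [add_smul]; abel
  | single h m =>
      have hm : (MonoidAlgebra.single h m : GR n) = m • of ℤ (FG n) h := by
        rw [MonoidAlgebra.of_apply, MonoidAlgebra.smul_single, smul_eq_mul, mul_one]
      rw [hm]
      induction α using MonoidAlgebra.induction_linear with
      | zero => simp
      | add f g hf hg =>
          rw [add_mul, map_add, map_add, hf, hg, smul_add, add_mul]; abel
      | single g k =>
          have hk : (MonoidAlgebra.single g k : GR n) = k • of ℤ (FG n) g := by
            rw [MonoidAlgebra.of_apply, MonoidAlgebra.smul_single, smul_eq_mul, mul_one]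
          rw [hk]
          have : (k • of ℤ (FG n) g) * (m • of ℤ (FG n) h)
              = (k * m) • of ℤ (FG n) (g * h) := by
            rw [map_mul]; rw [smul_mul_assoc, mul_smul_comm, smul_smul]
          have εs : ∀ (m : ℤ) (x : GR n), ε (m • x) = m * ε x := fun m x => by
            rw [zsmul_eq_mul, map_mul, map_intCast]; norm_num
          rw [this, map_smul, hδ₃, εs, hε, mul_one, smul_add, map_smul, map_smul]
          rw [mul_smul_comm, smul_mul_assoc, smul_smul, smul_smul, mul_comm m k]

end aux

section main
variable {n : ℕ} (δ : Fin n → (GR n →ₗ[ℤ] GR n))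
variable (hδ₁ : ∀ i : Fin n, δ i (of ℤ (FG n) (FreeGroup.of i)) = 1)
variable (hδ₂ : ∀ i j : Fin n, j ≠ i → δ i (of ℤ (FG n) (FreeGroup.of j)) = 0)
variable (hδ₃ : ∀ (i : Fin n) (u v : FG n),
      δ i (of ℤ (FG n) (u * v)) =
        δ i (of ℤ (FG n) u) + of ℤ (FG n) u * δ i (of ℤ (FG n) v))
variable (ε : GR n →+* ℤ) (hε : ∀ g : FG n, ε (of ℤ (FG n) g) = 1)

include hδ₃ in
lemma d_one (j : Fin n) : δ j (1 : GR n) = 0 := by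
  have h := hδ₃ j 1 1
  rw [one_mul, map_one, one_mul] at h
  exact (left_eq_add.mp h)

include hδ₃ in
lemma d_inv (j : Fin n) (u : FG n) :
    δ j (of ℤ (FG n) u⁻¹) = -(of ℤ (FG n) u⁻¹ * δ j (of ℤ (FG n) u)) := by
  have h := hδ₃ j u⁻¹ u
  rw [inv_mul_cancel, map_one, d_one δ hδ₃] at h
  exact eq_neg_of_add_eq_zero_left h.symm

include hδ₂ hδ₃ hε in
lemma key (i : Fin n) (u v w : FG n) :
    ∀ l : List (Fin n), i ∉ l →
    foxIter δ l (of ℤ (FG n) (v * (u⁻¹ * FreeGroup.of i * u) * w))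
      - foxIter δ l (of ℤ (FG n) (v * w))
    = of ℤ (FG n) v * (of ℤ (FG n) u⁻¹ * of ℤ (FG n) (FreeGroup.of i) * of ℤ (FG n) u - 1)
        * foxIter δ l (of ℤ (FG n) w)
      + of ℤ (FG n) v * of ℤ (FG n) u⁻¹ * (of ℤ (FG n) (FreeGroup.of i) - 1) *
        (foxIter δ l (of ℤ (FG n) (u * w))
          - of ℤ (FG n) u * foxIter δ l (of ℤ (FG n) w)) := by
  intro l hl
  induction l with
  | nil =>
      simp only [foxIter, map_mul]
      noncomm_ring
  | cons j l ih =>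
      have hji : i ≠ j := fun h => hl (h ▸ List.mem_cons_self (a := j) (l := l))
      have hl' : i ∉ l := fun h => hl (List.mem_cons_of_mem j h)
      have PR : ∀ (α β : GR n), δ j (α * β) = ε β • δ j α + α * δ j β :=
        prod_rule δ hδ₃ ε hε j
      show δ j (foxIter δ l _) - δ j (foxIter δ l _) = _
      rw [← map_sub, ih hl']
      simp only [foxIter, map_mul]
      simp only [map_add, map_sub, PR, d_one δ hδ₃, d_inv δ hδ₃, hδ₂ j i hji,
        map_one, map_mul, hε, mul_one, one_mul, mul_zero, zero_mul, sub_zero,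
        smul_sub, smul_add, sub_mul, mul_sub, mul_add, add_mul, mul_assoc,
        smul_mul_assoc, mul_smul_comm, smul_zero, zero_smul, one_smul, smul_smul,
        mul_neg, neg_mul, smul_neg, neg_neg]
      module

end main

/-- Skein relation, case `k = 1`:
`δ_{i₁}…δ_{iᵣ}(v u⁻¹ x_{i₁} u w)(1) - δ_{i₁}…δ_{iᵣ}(vw)(1) = δ_{i₂}…δ_{iᵣ}(u w)(1)`,
i.e. `μ_{i₁…iᵣ}(L, l₊) - μ_{i₁…iᵣ}(L, l₋) = μ_{i₂…iᵣ}(L - L_{i₁}, l₀)`. -/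
theorem milnor_skein_relation_first_index (n : ℕ)
    (δ : Fin n → (GR n →ₗ[ℤ] GR n))
    (hδ₁ : ∀ i : Fin n, δ i (of ℤ (FG n) (FreeGroup.of i)) = 1)
    (hδ₂ : ∀ i j : Fin n, j ≠ i → δ i (of ℤ (FG n) (FreeGroup.of j)) = 0)
    (hδ₃ : ∀ (i : Fin n) (u v : FG n),
      δ i (of ℤ (FG n) (u * v)) =
        δ i (of ℤ (FG n) u) + of ℤ (FG n) u * δ i (of ℤ (FG n) v))
    (ε : GR n →+* ℤ)
    (hε : ∀ g : FG n, ε (of ℤ (FG n) g) = 1)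
    (b : List (Fin n)) (i : Fin n) (hnd : (i :: b).Nodup) (u v w : FG n) :
    ε (foxIter δ (i :: b)
        (of ℤ (FG n) (v * (u⁻¹ * FreeGroup.of i * u) * w))) -
      ε (foxIter δ (i :: b) (of ℤ (FG n) (v * w))) =
        ε (foxIter δ b (of ℤ (FG n) (u * w))) := by
  obtain ⟨hib, hb⟩ := List.nodup_cons.mp hnd
  have PR : ∀ (α β : GR n), δ i (α * β) = ε β • δ i α + α * δ i β :=
    prod_rule δ hδ₃ ε hε i
  have εs : ∀ (m : ℤ) (x : GR n), ε (m • x) = m * ε x := fun m x => by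
    rw [zsmul_eq_mul, map_mul, map_intCast]; norm_num
  have hk := key δ hδ₂ hδ₃ ε hε i u v w b hib
  show ε (δ i (foxIter δ b _)) - ε (δ i (foxIter δ b _)) = _
  rw [← map_sub, ← map_sub, hk]
  simp only [map_add, map_sub, PR, d_one δ hδ₃, d_inv δ hδ₃, hδ₁ i, map_one, map_mul,
    mul_neg, neg_mul, smul_neg, map_neg, map_zero, one_smul, εs, hε, smul_eq_mul]
  ring
end
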